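/- Define B(n) by B(n) ≤ max over n_1,n_2 ≤ 2n/3 with n_1+n_2 ≤ n of [B(n_1 + C√(Δn)) + B(n_2 + C√(Δn)) + C√(Δn)] for n ≥ r, and B(n) = 0 for n < r, where Δ = o(r). Then B(n) = O(√Δ · n/√r). -/

import Mathlib

private lemma sq_helper {x y : ℝ} (hx : 0 ≤ x) (hy : 0 ≤ y) (h : x ^ 2 ≤ y ^ 2) : x ≤ y := by
  nlinarith [sq_nonneg (x - y), sq_nonneg (x + y)]

set_option maxHeartbeats 4000000 in
/-- The recurrence `B(n) ≤ max_{n₁,n₂ ≤ 2n/3, n₁+n₂ ≤ n}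
[B(n₁ + ⌈C√(Δn)⌉) + B(n₂ + ⌈C√(Δn)⌉) + C√(Δn)]` for `n ≥ r`, with `B(n) = 0` for
`n < r` and `Δ = o(r)` (encoded as an explicit smallness condition on `Δ` versus `r`),
solves to `B(n) = O(√Δ · n / √r)`, with the constant depending only on `C`. -/
theorem recurrence_boundary_complexity :
    ∀ C : ℝ, 0 < C → ∃ c : ℝ, 0 < c ∧ ∀ Δ r : ℕ,
      (100 * (C + 1) ^ 2 * (Δ + 1) ≤ (r : ℝ)) →
      ∀ B : ℕ → ℝ,
        (∀ n < r, B n = 0) →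
        (∀ n, r ≤ n → ∃ n₁ n₂ : ℕ, 3 * n₁ ≤ 2 * n ∧ 3 * n₂ ≤ 2 * n ∧ n₁ + n₂ ≤ n ∧
          B n ≤ B (n₁ + ⌈C * Real.sqrt (Δ * n)⌉₊) + B (n₂ + ⌈C * Real.sqrt (Δ * n)⌉₊) +
            C * Real.sqrt (Δ * n)) →
        ∀ n : ℕ, B n ≤ c * Real.sqrt Δ * n / Real.sqrt r := by
  intro C hC
  refine ⟨4620 * C, by positivity, ?_⟩
  intro Δ r hr B hB0 hrec
  have hΔ0 : (0:ℝ) ≤ (Δ:ℝ) := Nat.cast_nonneg _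
  have hr100 : (100:ℝ) ≤ (r:ℝ) := by
    have e0 : (1:ℝ) ≤ (C+1)^2 := by linarith [sq_nonneg C]
    have e1 : (1:ℝ)*1 ≤ (C+1)^2*((Δ:ℝ)+1) :=
      mul_le_mul e0 (by linarith) one_pos.le (sq_nonneg _)
    linarith
  have hrpos : (0:ℝ) < (r:ℝ) := by linarith
  have hsr : 0 < Real.sqrt r := Real.sqrt_pos.mpr hrpos
  have hsΔ : 0 ≤ Real.sqrt Δ := Real.sqrt_nonneg _
  have hrr : Real.sqrt r * Real.sqrt r = (r:ℝ) := Real.mul_self_sqrt hrpos.le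
  have hCΔ : 0 ≤ C * Real.sqrt Δ := by positivity
  -- the main induction
  have key : ∀ n : ℕ, B n ≤ (if n < r then (0:ℝ) else if n ≤ 31*r then
      20*C*Real.sqrt Δ*(n:ℝ)^2/((r:ℝ)*Real.sqrt r) else
      C*Real.sqrt Δ*(4620*(n:ℝ) - 4000*Real.sqrt r*Real.sqrt n)/Real.sqrt r) := by
    intro n
    induction n using Nat.strong_induction_on with
    | _ n ih =>
      by_cases hn : n < r
      · rw [if_pos hn]; exact le_of_eq (hB0 n hn)
      rw [if_neg hn]
      push_neg at hn
      obtain ⟨n₁, n₂, h31, h32, h12, hB⟩ := hrec n hn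
      set T := ⌈C * Real.sqrt ((Δ:ℝ) * (n:ℝ))⌉₊ with hTdef
      have hnr : (r:ℝ) ≤ (n:ℝ) := Nat.cast_le.mpr hn
      have hnpos : (0:ℝ) < (n:ℝ) := lt_of_lt_of_le hrpos hnr
      have hsnn : Real.sqrt n * Real.sqrt n = (n:ℝ) := Real.mul_self_sqrt hnpos.le
      have hsrsn : Real.sqrt r ≤ Real.sqrt n := Real.sqrt_le_sqrt hnr
      have hsn0 : 0 < Real.sqrt n := lt_of_lt_of_le hsr hsrsn
      have hrsn_le_n : Real.sqrt r * Real.sqrt n ≤ (n:ℝ) := by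
        have := mul_le_mul_of_nonneg_right hsrsn (Real.sqrt_nonneg (n:ℝ))
        linarith
      have h100_le : (100:ℝ) ≤ Real.sqrt r * Real.sqrt n := by
        have := mul_le_mul_of_nonneg_left hsrsn hsr.le
        linarith
      have hsqD : Real.sqrt ((Δ:ℝ) * n) = Real.sqrt Δ * Real.sqrt n := Real.sqrt_mul hΔ0 _
      have hCsq : C * Real.sqrt ((Δ:ℝ)*n) ≤ (1/10) * (Real.sqrt r * Real.sqrt n) := by
        apply sq_helper (by positivity) (by positivity)
        have e1 : Real.sqrt ((Δ:ℝ)*n) ^ 2 = (Δ:ℝ)*n := Real.sq_sqrt (by positivity)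
        have h2 : 100 * (C^2 * (Δ:ℝ)) ≤ (r:ℝ) := by
          have a1 : (C+1)^2 = C^2 + 2*C + 1 := by ring
          have a2 : C^2*(Δ:ℝ) ≤ (C+1)^2*((Δ:ℝ)+1) := by
            have := mul_le_mul (by linarith : C^2 ≤ (C+1)^2)
              (by linarith : (Δ:ℝ) ≤ (Δ:ℝ)+1) hΔ0 (sq_nonneg (C+1))
            linarith
          have a3 := mul_le_mul_of_nonneg_left a2 (by norm_num : (0:ℝ) ≤ 100)
          linarith
        have h3 := mul_le_mul_of_nonneg_right h2 hnpos.le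
        calc (C * Real.sqrt ((Δ:ℝ)*n))^2 = C^2*((Δ:ℝ)*n) := by rw [mul_pow, e1]
          _ ≤ (1/100)*((r:ℝ)*(n:ℝ)) := by linarith
          _ = ((1/10)*(Real.sqrt r*Real.sqrt n))^2 := by
              rw [mul_pow, mul_pow, Real.sq_sqrt hrpos.le, Real.sq_sqrt hnpos.le]; ring
      have h1T : (T:ℝ) < C * Real.sqrt ((Δ:ℝ)*(n:ℝ)) + 1 := by
        rw [hTdef]; exact Nat.ceil_lt_add_one (by positivity)
      clear_value T
      clear hTdef
      have hT : (T:ℝ) ≤ (11/100)*(Real.sqrt r * Real.sqrt n) := by linarith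
      have hT0 : (0:ℝ) ≤ (T:ℝ) := Nat.cast_nonneg _
      have hn₁ : (n₁:ℝ) ≤ 2/3 * n := by
        have := (Nat.cast_le (α:=ℝ)).mpr h31; push_cast at this; linarith
      have hn₂ : (n₂:ℝ) ≤ 2/3 * n := by
        have := (Nat.cast_le (α:=ℝ)).mpr h32; push_cast at this; linarith
      have h12' : (n₁:ℝ) + n₂ ≤ n := by exact_mod_cast h12
      have hm₁ : ((n₁ + T:ℕ):ℝ) ≤ (233/300)*n := by push_cast; linarith
      have hm₂ : ((n₂ + T:ℕ):ℝ) ≤ (233/300)*n := by push_cast; linarith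
      have hm₁lt : n₁ + T < n := by
        have h : ((n₁ + T:ℕ):ℝ) < (n:ℝ) := by linarith
        exact_mod_cast h
      have hm₂lt : n₂ + T < n := by
        have h : ((n₂ + T:ℕ):ℝ) < (n:ℝ) := by linarith
        exact_mod_cast h
      have hcost : C * Real.sqrt ((Δ:ℝ)*n) = C * (Real.sqrt Δ * Real.sqrt n) := by rw [hsqD]
      rw [hcost] at hB
      by_cases h31r : n ≤ 31*r
      · -- small regime: quadratic bound
        rw [if_pos h31r]
        have hq : ∀ m : ℕ, m < n → B m ≤ 20*C*Real.sqrt Δ*(m:ℝ)^2/((r:ℝ)*Real.sqrt r) := by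
          intro m hm
          refine le_trans (ih m hm) ?_
          by_cases h1 : m < r
          · rw [if_pos h1]; positivity
          · rw [if_neg h1, if_pos (by omega : m ≤ 31*r)]
        have hq₁ := hq _ hm₁lt
        have hq₂ := hq _ hm₂lt
        have hD : (0:ℝ) < (r:ℝ)*Real.sqrt r := by positivity
        have hbr : 20*C*Real.sqrt Δ*((n₁+T:ℕ):ℝ)^2 + 20*C*Real.sqrt Δ*((n₂+T:ℕ):ℝ)^2
            + (C*(Real.sqrt Δ*Real.sqrt n))*((r:ℝ)*Real.sqrt r)
            ≤ 20*C*Real.sqrt Δ*(n:ℝ)^2 := by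
          have hx₁0 : (0:ℝ) ≤ ((n₁+T:ℕ):ℝ) := Nat.cast_nonneg _
          have hx₂0 : (0:ℝ) ≤ ((n₂+T:ℕ):ℝ) := Nat.cast_nonneg _
          have hsum : ((n₁+T:ℕ):ℝ) + ((n₂+T:ℕ):ℝ) ≤ (61/50)*n := by push_cast; linarith
          have e1 : ((n₁+T:ℕ):ℝ)*((n₁+T:ℕ):ℝ) ≤ ((233/300)*n)*((n₁+T:ℕ):ℝ) :=
            mul_le_mul_of_nonneg_right hm₁ hx₁0
          have e2 : ((n₂+T:ℕ):ℝ)*((n₂+T:ℕ):ℝ) ≤ ((233/300)*n)*((n₂+T:ℕ):ℝ) :=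
            mul_le_mul_of_nonneg_right hm₂ hx₂0
          have e3 : ((233/300)*(n:ℝ))*(((n₁+T:ℕ):ℝ) + ((n₂+T:ℕ):ℝ)) ≤ ((233/300)*n)*((61/50)*n) :=
            mul_le_mul_of_nonneg_left hsum (by positivity)
          have e4 : Real.sqrt n*((r:ℝ)*Real.sqrt r) ≤ (n:ℝ)^2 := by
            have f1 := mul_le_mul_of_nonneg_left hrsn_le_n hrpos.le
            have f2 := mul_le_mul_of_nonneg_right hnr hnpos.le
            have f3 : (n:ℝ)^2 = (n:ℝ)*(n:ℝ) := by ring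
            linarith [f1, f2, f3]
          have P : 20*((n₁+T:ℕ):ℝ)^2 + 20*((n₂+T:ℕ):ℝ)^2
              + Real.sqrt n*((r:ℝ)*Real.sqrt r) ≤ 20*(n:ℝ)^2 := by
            have f1 : ((n₁+T:ℕ):ℝ)^2 = ((n₁+T:ℕ):ℝ)*((n₁+T:ℕ):ℝ) := by ring
            have f2 : ((n₂+T:ℕ):ℝ)^2 = ((n₂+T:ℕ):ℝ)*((n₂+T:ℕ):ℝ) := by ring
            have f3 : (n:ℝ)^2 = (n:ℝ)*(n:ℝ) := by ring
            linarith [e1, e2, e3, e4, f1, f2, f3, mul_nonneg hnpos.le hnpos.le]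
          linarith [mul_le_mul_of_nonneg_left P hCΔ]
        calc B n ≤ 20*C*Real.sqrt Δ*((n₁+T:ℕ):ℝ)^2/((r:ℝ)*Real.sqrt r)
                  + 20*C*Real.sqrt Δ*((n₂+T:ℕ):ℝ)^2/((r:ℝ)*Real.sqrt r)
                  + C*(Real.sqrt Δ*Real.sqrt n) := by linarith
          _ ≤ 20*C*Real.sqrt Δ*(n:ℝ)^2/((r:ℝ)*Real.sqrt r) := by
              rw [← add_div, div_add' _ _ _ hD.ne']
              exact (div_le_div_iff_of_pos_right hD).mpr (by linarith [hbr])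
      · -- large regime: linear bound
        rw [if_neg h31r]
        have h31n : (31:ℝ)*r < n := by
          have := (Nat.cast_lt (α:=ℝ)).mpr (not_le.mp h31r); push_cast at this; linarith
        have hsrn31 : Real.sqrt r * Real.sqrt n ≤ (2/11)*n := by
          apply sq_helper (by positivity) (by positivity)
          have g1 : (Real.sqrt r * Real.sqrt n)^2 = (r:ℝ)*n := by
            rw [mul_pow, Real.sq_sqrt hrpos.le, Real.sq_sqrt hnpos.le]
          have g2 := mul_le_mul_of_nonneg_right (show (r:ℝ) ≤ n/31 by linarith) hnpos.le
          have g3 : ((2:ℝ)/11*(n:ℝ))^2 = (4/121)*((n:ℝ)*(n:ℝ)) := by ring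
          have g4 : ((n:ℝ)/31)*(n:ℝ) = (1/31)*((n:ℝ)*(n:ℝ)) := by ring
          linarith [g1, g2, g3, g4, mul_nonneg hnpos.le hnpos.le]
        have hT50 : (T:ℝ) ≤ (1/50)*n := by linarith
        have hψ : ∀ m : ℕ, r ≤ m → m < n →
            B m ≤ C*Real.sqrt Δ*(4620*(m:ℝ) - 4000*Real.sqrt r*Real.sqrt m)/Real.sqrt r := by
          intro m hm hmn
          have hmr : (r:ℝ) ≤ (m:ℝ) := Nat.cast_le.mpr hm
          have hmpos : (0:ℝ) < (m:ℝ) := lt_of_lt_of_le hrpos hmr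
          have hsrm : Real.sqrt r ≤ Real.sqrt m := Real.sqrt_le_sqrt hmr
          have hsm : Real.sqrt r * Real.sqrt m ≤ (m:ℝ) := by
            have := mul_le_mul_of_nonneg_right hsrm (Real.sqrt_nonneg (m:ℝ))
            have h2 := Real.mul_self_sqrt hmpos.le
            linarith
          refine le_trans (ih m hmn) ?_
          rw [if_neg (by omega : ¬ m < r)]
          by_cases hm31 : m ≤ 31*r
          · rw [if_pos hm31]
            rw [div_le_div_iff₀ (by positivity) (by positivity)]
            have hm31' : (m:ℝ) ≤ 31*r := by
              have := (Nat.cast_le (α:=ℝ)).mpr hm31; push_cast at this; linarith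
            have h1 : 20*(m:ℝ)^2 ≤ 620*(r:ℝ)*m := by
              have := mul_le_mul_of_nonneg_right hm31' hmpos.le
              linarith [this]
            have h2 : (620:ℝ)*m ≤ 4620*m - 4000*(Real.sqrt r*Real.sqrt m) := by linarith
            have h3 : (0:ℝ) ≤ C*Real.sqrt Δ*Real.sqrt r := by positivity
            have k1 := mul_le_mul_of_nonneg_right h1 h3
            have k2 := mul_le_mul_of_nonneg_right h2 (mul_nonneg h3 hrpos.le)
            linarith [k1, k2]
          · rw [if_neg hm31]
        by_cases hc₁ : n₁ + T < r
        · have hb₁ : B (n₁+T) ≤ 0 := le_of_eq (hB0 _ hc₁)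
          by_cases hc₂ : n₂ + T < r
          · have hb₂ : B (n₂+T) ≤ 0 := le_of_eq (hB0 _ hc₂)
            have hmain : C*(Real.sqrt Δ*Real.sqrt n)
                ≤ C*Real.sqrt Δ*(4620*(n:ℝ) - 4000*Real.sqrt r*Real.sqrt n)/Real.sqrt r := by
              rw [le_div_iff₀ hsr]
              have h5 : 4001*(Real.sqrt r*Real.sqrt n) ≤ 4620*(n:ℝ) := by linarith
              have k1 := mul_le_mul_of_nonneg_left h5 hCΔ
              linarith [k1]
            linarith
          · push_neg at hc₂
            have hb₂ := hψ _ hc₂ hm₂lt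
            have hm₂' : ((n₂+T:ℕ):ℝ) ≤ (103/150)*n := by push_cast; linarith
            have ha₂0 : (0:ℝ) ≤ Real.sqrt ((n₂+T:ℕ):ℝ) := Real.sqrt_nonneg _
            have hmain : C*Real.sqrt Δ*(4620*((n₂+T:ℕ):ℝ) - 4000*Real.sqrt r*Real.sqrt ((n₂+T:ℕ):ℝ))/Real.sqrt r
                + C*(Real.sqrt Δ*Real.sqrt n)
                ≤ C*Real.sqrt Δ*(4620*(n:ℝ) - 4000*Real.sqrt r*Real.sqrt n)/Real.sqrt r := by
              rw [div_add' _ _ _ hsr.ne']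
              refine (div_le_div_iff_of_pos_right hsr).mpr ?_
              have hinner : 4620*((n₂+T:ℕ):ℝ) - 4000*(Real.sqrt r*Real.sqrt ((n₂+T:ℕ):ℝ))
                  + Real.sqrt n*Real.sqrt r + 4000*(Real.sqrt r*Real.sqrt n) ≤ 4620*(n:ℝ) := by
                linarith [mul_nonneg hsr.le ha₂0]
              have k1 := mul_le_mul_of_nonneg_left hinner hCΔ
              linarith [k1]
            linarith
        · push_neg at hc₁
          have hb₁ := hψ _ hc₁ hm₁lt
          by_cases hc₂ : n₂ + T < r
          · have hb₂ : B (n₂+T) ≤ 0 := le_of_eq (hB0 _ hc₂)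
            have hm₁' : ((n₁+T:ℕ):ℝ) ≤ (103/150)*n := by push_cast; linarith
            have ha₁0 : (0:ℝ) ≤ Real.sqrt ((n₁+T:ℕ):ℝ) := Real.sqrt_nonneg _
            have hmain : C*Real.sqrt Δ*(4620*((n₁+T:ℕ):ℝ) - 4000*Real.sqrt r*Real.sqrt ((n₁+T:ℕ):ℝ))/Real.sqrt r
                + C*(Real.sqrt Δ*Real.sqrt n)
                ≤ C*Real.sqrt Δ*(4620*(n:ℝ) - 4000*Real.sqrt r*Real.sqrt n)/Real.sqrt r := by
              rw [div_add' _ _ _ hsr.ne']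
              refine (div_le_div_iff_of_pos_right hsr).mpr ?_
              have hinner : 4620*((n₁+T:ℕ):ℝ) - 4000*(Real.sqrt r*Real.sqrt ((n₁+T:ℕ):ℝ))
                  + Real.sqrt n*Real.sqrt r + 4000*(Real.sqrt r*Real.sqrt n) ≤ 4620*(n:ℝ) := by
                linarith [mul_nonneg hsr.le ha₁0]
              have k1 := mul_le_mul_of_nonneg_left hinner hCΔ
              linarith [k1]
            linarith
          · push_neg at hc₂
            have hb₂ := hψ _ hc₂ hm₂lt
            have hx₁0 : (0:ℝ) ≤ ((n₁+T:ℕ):ℝ) := Nat.cast_nonneg _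
            have hx₂0 : (0:ℝ) ≤ ((n₂+T:ℕ):ℝ) := Nat.cast_nonneg _
            have ha₁0 : (0:ℝ) ≤ Real.sqrt ((n₁+T:ℕ):ℝ) := Real.sqrt_nonneg _
            have ha₂0 : (0:ℝ) ≤ Real.sqrt ((n₂+T:ℕ):ℝ) := Real.sqrt_nonneg _
            have ha₁2 : (Real.sqrt ((n₁+T:ℕ):ℝ))^2 = ((n₁+T:ℕ):ℝ) := Real.sq_sqrt hx₁0
            have ha₂2 : (Real.sqrt ((n₂+T:ℕ):ℝ))^2 = ((n₂+T:ℕ):ℝ) := Real.sq_sqrt hx₂0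
            have hsn2 : (Real.sqrt (n:ℝ))^2 = (n:ℝ) := Real.sq_sqrt hnpos.le
            have hm₁' : ((n₁+T:ℕ):ℝ) ≤ (103/150)*n := by push_cast; linarith
            have hm₂' : ((n₂+T:ℕ):ℝ) ≤ (103/150)*n := by push_cast; linarith
            have hsum : ((n₁+T:ℕ):ℝ) + ((n₂+T:ℕ):ℝ)
                ≤ (n:ℝ) + (22/100)*(Real.sqrt r*Real.sqrt n) := by push_cast; linarith
            have hinner : 4620*((n₁+T:ℕ):ℝ) - 4000*(Real.sqrt r*Real.sqrt ((n₁+T:ℕ):ℝ))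
                + (4620*((n₂+T:ℕ):ℝ) - 4000*(Real.sqrt r*Real.sqrt ((n₂+T:ℕ):ℝ)))
                + Real.sqrt n*Real.sqrt r + 4000*(Real.sqrt r*Real.sqrt n) ≤ 4620*(n:ℝ) := by
              by_cases hs : ((n₁+T:ℕ):ℝ) + ((n₂+T:ℕ):ℝ) ≤ (99/100)*n
              · have hu0 : (0:ℝ) ≤ Real.sqrt (((n₁+T:ℕ):ℝ)+((n₂+T:ℕ):ℝ)) := Real.sqrt_nonneg _
                have hu2 : (Real.sqrt (((n₁+T:ℕ):ℝ)+((n₂+T:ℕ):ℝ)))^2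
                    = ((n₁+T:ℕ):ℝ)+((n₂+T:ℕ):ℝ) := Real.sq_sqrt (by linarith)
                have hu_le_sn : Real.sqrt (((n₁+T:ℕ):ℝ)+((n₂+T:ℕ):ℝ)) ≤ Real.sqrt n :=
                  Real.sqrt_le_sqrt (by linarith)
                have hau : Real.sqrt (((n₁+T:ℕ):ℝ)+((n₂+T:ℕ):ℝ))
                    ≤ Real.sqrt ((n₁+T:ℕ):ℝ) + Real.sqrt ((n₂+T:ℕ):ℝ) := by
                  apply sq_helper hu0 (by linarith)
                  have := mul_nonneg ha₁0 ha₂0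
                  linarith [hu2, ha₁2, ha₂2, this]
                have e1 : Real.sqrt n*(Real.sqrt n - Real.sqrt (((n₁+T:ℕ):ℝ)+((n₂+T:ℕ):ℝ)))
                    ≤ (n:ℝ) - (((n₁+T:ℕ):ℝ)+((n₂+T:ℕ):ℝ)) := by
                  have := mul_le_mul_of_nonneg_left hu_le_sn hu0
                  linarith [hu2, hsn2, this]
                have e2 : Real.sqrt r*(Real.sqrt n - Real.sqrt (((n₁+T:ℕ):ℝ)+((n₂+T:ℕ):ℝ)))
                    ≤ Real.sqrt n*(Real.sqrt n - Real.sqrt (((n₁+T:ℕ):ℝ)+((n₂+T:ℕ):ℝ))) :=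
                  mul_le_mul_of_nonneg_right hsrsn (by linarith)
                have e3 : Real.sqrt r*(Real.sqrt n - (Real.sqrt ((n₁+T:ℕ):ℝ) + Real.sqrt ((n₂+T:ℕ):ℝ)))
                    ≤ Real.sqrt r*(Real.sqrt n - Real.sqrt (((n₁+T:ℕ):ℝ)+((n₂+T:ℕ):ℝ))) :=
                  mul_le_mul_of_nonneg_left (by linarith) hsr.le
                linarith [e1, e2, e3]
              · push_neg at hs
                have hx₁low : (91/300)*(n:ℝ) ≤ ((n₁+T:ℕ):ℝ) := by linarith
                have hx₂low : (91/300)*(n:ℝ) ≤ ((n₂+T:ℕ):ℝ) := by linarith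
                have hxx : (Real.sqrt ((n₁+T:ℕ):ℝ) * Real.sqrt ((n₂+T:ℕ):ℝ))^2
                    = ((n₁+T:ℕ):ℝ)*((n₂+T:ℕ):ℝ) := by rw [mul_pow, ha₁2, ha₂2]
                have haa : (91/300)*(n:ℝ) ≤ Real.sqrt ((n₁+T:ℕ):ℝ) * Real.sqrt ((n₂+T:ℕ):ℝ) := by
                  apply sq_helper (by positivity) (mul_nonneg ha₁0 ha₂0)
                  have := mul_le_mul hx₁low hx₂low (by positivity) hx₁0
                  linarith [hxx, this]
                have hbal : (12635/10000)*Real.sqrt n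
                    ≤ Real.sqrt ((n₁+T:ℕ):ℝ) + Real.sqrt ((n₂+T:ℕ):ℝ) := by
                  apply sq_helper (by positivity) (by linarith)
                  linarith [hsn2, ha₁2, ha₂2, haa, hs]
                have e4 : (12635/10000)*(Real.sqrt r*Real.sqrt n)
                    ≤ Real.sqrt r*(Real.sqrt ((n₁+T:ℕ):ℝ) + Real.sqrt ((n₂+T:ℕ):ℝ)) := by
                  have := mul_le_mul_of_nonneg_left hbal hsr.le
                  linarith
                have e5 : (0:ℝ) ≤ Real.sqrt r*Real.sqrt n := mul_nonneg hsr.le hsn0.le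
                linarith [hsum, e4, e5]
            have hmain : C*Real.sqrt Δ*(4620*((n₁+T:ℕ):ℝ) - 4000*Real.sqrt r*Real.sqrt ((n₁+T:ℕ):ℝ))/Real.sqrt r
                + C*Real.sqrt Δ*(4620*((n₂+T:ℕ):ℝ) - 4000*Real.sqrt r*Real.sqrt ((n₂+T:ℕ):ℝ))/Real.sqrt r
                + C*(Real.sqrt Δ*Real.sqrt n)
                ≤ C*Real.sqrt Δ*(4620*(n:ℝ) - 4000*Real.sqrt r*Real.sqrt n)/Real.sqrt r := by
              rw [← add_div, div_add' _ _ _ hsr.ne']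
              refine (div_le_div_iff_of_pos_right hsr).mpr ?_
              have k1 := mul_le_mul_of_nonneg_left hinner hCΔ
              linarith [k1]
            linarith
  -- conclude
  intro n
  refine le_trans (key n) ?_
  by_cases h1 : n < r
  · rw [if_pos h1]
    have h2 : (0:ℝ) ≤ 4620 * C * Real.sqrt Δ * n / Real.sqrt r := by positivity
    linarith
  · rw [if_neg h1]
    push_neg at h1
    have hnr : (r:ℝ) ≤ (n:ℝ) := Nat.cast_le.mpr h1
    have hnpos : (0:ℝ) < (n:ℝ) := lt_of_lt_of_le hrpos hnr
    by_cases h2 : n ≤ 31*r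
    · rw [if_pos h2]
      rw [div_le_div_iff₀ (by positivity) (by positivity)]
      have hm31' : (n:ℝ) ≤ 31*r := by
        have := (Nat.cast_le (α:=ℝ)).mpr h2; push_cast at this; linarith
      have hA : 20*(n:ℝ)^2 ≤ 4620*(r:ℝ)*n := by
        have := mul_le_mul_of_nonneg_right hm31' hnpos.le
        have f3 : (n:ℝ)^2 = (n:ℝ)*(n:ℝ) := by ring
        linarith [this, f3, mul_nonneg (mul_nonneg hrpos.le hnpos.le) (by norm_num : (0:ℝ) ≤ 1), mul_nonneg hrpos.le hnpos.le]
      have h3 : (0:ℝ) ≤ C*Real.sqrt Δ*Real.sqrt r := by positivity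
      have k1 := mul_le_mul_of_nonneg_right hA h3
      linarith [k1]
    · rw [if_neg h2]
      refine (div_le_div_iff_of_pos_right hsr).mpr ?_
      have h4 : (0:ℝ) ≤ 4000*Real.sqrt r*Real.sqrt n := by positivity
      have k1 := mul_nonneg hCΔ h4
      linarith [k1]
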